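/- arXiv:2102.01038 — 4 statements merged into one kernel-verified Lean document; each statement's English description precedes it below -/
import Mathlib

section
/- Let τ = (x_l, x_r), γ ∈ τ, and let w_τ(x) = I_h^1 w*(x) − w*(x) where w*(x) = |x − γ| and I_h^1 w* is the affine function on [x_l, x_r] agreeing with w* at x_l and x_r. Given v ∈ C([x_l, x_r]), let I v be the unique continuous function on [x_l, x_r] which is a polynomial of degree p on [x_l, γ] and on [γ, x_r] and interpolates v at the nodes ξ_i = x_l + i(γ−x_l)/p and ξ_{p+1+i} = γ + i(x_r−γ)/p, i = 0,…,p. Then there exist unique real coefficients α_1,…,α_{p+1} and β_1,…,β_{p+1} such that I v(x) = Σ_{j=1}^{p+1} (α_j + β_j w_τ(x)) φ_j(x) for all x ∈ [x_l, x_r], where {φ_j} is the nodal Lagrange basis of degree p on [x_l, x_r]. -/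
/-! On `[x_l, γ]` the enrichment is `w_τ = L + (x - γ)` and on `[γ, x_r]` it is `L - (x - γ)`,
where `L = I_h^1 w*` is affine, while `∑ (α_j + β_j w_τ) φ_j = A + w_τ B` for the interpolants
`A`, `B` of degree `≤ p` of `α`, `β` at the nodes. The representation therefore amounts to the
polynomial identities `A + (L ± (X - γ)) B = R₁, R₂`. Their difference `2 (X - γ) B = R₁ - R₂`
determines `B`, and it is solvable because `R₁ (γ) = R₂ (γ)`; since `deg ((X - γ) B) ≤ p`, also
`A = R₁ - (L + X - γ) B` has degree `≤ p`. Lagrange interpolation identifies `(α, β)` with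
`(A, B)`. -/

open Polynomial Finset

namespace Lagrange

variable {F ι : Type*} [Field F] [DecidableEq ι] (s : Finset ι) (v : ι → F)

theorem eval_interpolate (r : ι → F) (x : F) :
    (interpolate s v r).eval x = ∑ i ∈ s, r i * (Lagrange.basis s v i).eval x := by
  simp [interpolate_apply, eval_finsetSum]

theorem sum_add_mul_mul_eval_basis (r r' : ι → F) (w x : F) :
    ∑ i ∈ s, (r i + r' i * w) * (Lagrange.basis s v i).eval x =
      (interpolate s v r).eval x + w * (interpolate s v r').eval x := by
  simp only [eval_interpolate, mul_sum, ← sum_add_distrib]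
  exact sum_congr rfl fun i _ => by ring

end Lagrange

theorem equispaced_nodes_injective {K : Type*} [Field K] [CharZero K] {a b : K} (hab : a ≠ b)
    (p : ℕ) :
    Function.Injective fun k : Fin (p + 1) => a + k * (b - a) / p := by
  rcases p.eq_zero_or_pos with rfl | hp
  · exact fun i j _ => Subsingleton.elim (α := Fin 1) i j
  · intro i j hij
    have hp' : (p : K) ≠ 0 := Nat.cast_ne_zero.mpr hp.ne'
    have hba : b - a ≠ 0 := sub_ne_zero.mpr hab.symm
    simp only [add_right_inj, div_left_inj' hp', mul_left_inj' hba, Nat.cast_inj] at hij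
    exact Fin.ext hij

theorem eq_and_eq_of_add_mul_eq {R : Type*} [CommRing R] [IsDomain R] [NeZero (2 : R)]
    {L D A B A' B' : R} (hD : D ≠ 0)
    (h₁ : A + (L + D) * B = A' + (L + D) * B') (h₂ : A + (L - D) * B = A' + (L - D) * B') :
    A = A' ∧ B = B' := by
  have hB : 2 * D * (B - B') = 0 := by linear_combination h₁ - h₂
  have hB' : B = B' := by simpa [sub_eq_zero, hD, two_ne_zero] using hB
  exact ⟨by linear_combination h₁ - (L + D) * hB', hB'⟩

theorem exists_add_mul_eq_of_eval_eq {K : Type*} [Field K] [NeZero (2 : K)] {n : WithBot ℕ}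
    {R₁ R₂ L : K[X]} {γ : K} (h₁ : R₁.degree < n) (h₂ : R₂.degree < n) (hL : L.degree ≤ 1)
    (hγ : R₁.eval γ = R₂.eval γ) :
    ∃ A B : K[X], A.degree < n ∧ B.degree < n ∧
      A + (L + (X - C γ)) * B = R₁ ∧ A + (L - (X - C γ)) * B = R₂ := by
  obtain ⟨Q, hQ⟩ : X - C γ ∣ R₁ - R₂ := dvd_iff_isRoot.mpr (by simp [hγ])
  set D : K[X] := X - C γ
  set B := C 2⁻¹ * Q
  have hDB : D * B = C 2⁻¹ * (R₁ - R₂) := by rw [hQ]; ring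
  have hhalf : (2 : K[X]) * C 2⁻¹ = 1 := by
    rw [← C_ofNat, ← C_mul, mul_inv_cancel₀ two_ne_zero, C_1]
  have hDB_lt : (D * B).degree < n := by
    rw [hDB, degree_C_mul (inv_ne_zero two_ne_zero)]
    exact (degree_sub_le _ _).trans_lt (max_lt h₁ h₂)
  have hLD : (L + D).degree ≤ D.degree := by
    rw [degree_X_sub_C]; exact (degree_add_le _ _).trans (max_le hL (degree_X_sub_C γ).le)
  refine ⟨R₁ - (L + D) * B, B, ?_, ?_, by ring,
    by linear_combination (-2) * hDB - (R₁ - R₂) * hhalf⟩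
  · refine (degree_sub_le _ _).trans_lt (max_lt h₁ ?_)
    calc ((L + D) * B).degree = (L + D).degree + B.degree := degree_mul
      _ ≤ D.degree + B.degree := by gcongr
      _ = (D * B).degree := degree_mul.symm
      _ < n := hDB_lt
  · exact (degree_le_mul_left B (X_sub_C_ne_zero γ)).trans_lt (by rwa [mul_comm])

section OrderedField

variable {K : Type*} [Field K] [LinearOrder K] [IsStrictOrderedRing K]

theorem Polynomial.eq_of_eval_eq_on_Icc {a b : K} (hab : a < b) {P Q : K[X]}
    (h : ∀ x ∈ Set.Icc a b, P.eval x = Q.eval x) : P = Q :=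
  eq_of_infinite_eval_eq P Q ((Set.Icc_infinite hab).mono h)

theorem forall_eq_add_sub_abs_mul_iff {a b γ : K} (haγ : a < γ) (hγb : γ < b) {f : K → K}
    {R₁ R₂ : K[X]}
    (h₁ : ∀ x ∈ Set.Icc a γ, f x = R₁.eval x) (h₂ : ∀ x ∈ Set.Icc γ b, f x = R₂.eval x)
    (L A B : K[X]) :
    (∀ x ∈ Set.Icc a b, f x = A.eval x + (L.eval x - |x - γ|) * B.eval x) ↔
      A + (L + (X - C γ)) * B = R₁ ∧ A + (L - (X - C γ)) * B = R₂ := by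
  have left : ∀ x ≤ γ, A.eval x + (L.eval x - |x - γ|) * B.eval x
      = (A + (L + (X - C γ)) * B).eval x := fun x hx => by
    rw [abs_of_nonpos (sub_nonpos.mpr hx), sub_neg_eq_add]
    simp only [eval_add, eval_mul, eval_sub, eval_X, eval_C]
  have right : ∀ x, γ ≤ x → A.eval x + (L.eval x - |x - γ|) * B.eval x
      = (A + (L - (X - C γ)) * B).eval x := fun x hx => by
    rw [abs_of_nonneg (sub_nonneg.mpr hx)]
    simp only [eval_add, eval_mul, eval_sub, eval_X, eval_C]
  constructor
  · intro h
    refine ⟨eq_of_eval_eq_on_Icc haγ fun x hx => ?_, eq_of_eval_eq_on_Icc hγb fun x hx => ?_⟩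
    · rw [← left x hx.2, ← h x ⟨hx.1, hx.2.trans hγb.le⟩, h₁ x hx]
    · rw [← right x hx.1, ← h x ⟨haγ.le.trans hx.1, hx.2⟩, h₂ x hx]
  · rintro ⟨e₁, e₂⟩ x hx
    rcases le_total x γ with hxγ | hγx
    · rw [left x hxγ, e₁, h₁ x ⟨hx.1, hxγ⟩]
    · rw [right x hγx, e₂, h₂ x ⟨hγx, hx.2⟩]

end OrderedField

theorem stmt1_general (p : ℕ) (xl xr γ : ℝ) (hγ : γ ∈ Set.Ioo xl xr)
    (Iv : ℝ → ℝ)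
    (R₁ R₂ : Polynomial ℝ) (hdeg₁ : R₁.natDegree ≤ p) (hdeg₂ : R₂.natDegree ≤ p)
    (hIv₁ : ∀ x ∈ Set.Icc xl γ, Iv x = R₁.eval x)
    (hIv₂ : ∀ x ∈ Set.Icc γ xr, Iv x = R₂.eval x) :
    ∃! c : (Fin (p + 1) → ℝ) × (Fin (p + 1) → ℝ),
      ∀ x ∈ Set.Icc xl xr,
        Iv x = ∑ j : Fin (p + 1),
          (c.1 j + c.2 j *
              ((γ - xl) + (x - xl) * ((xr - γ) - (γ - xl)) / (xr - xl) - |x - γ|)) *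
            (Lagrange.basis Finset.univ
              (fun k : Fin (p + 1) => xl + (k : ℕ) * (xr - xl) / p) j).eval x := by
  obtain ⟨hlγ, hγr⟩ := hγ
  set t : Fin (p + 1) → ℝ := fun k => xl + (k : ℕ) * (xr - xl) / p
  have ht : Set.InjOn t (univ : Finset (Fin (p + 1))) :=
    (equispaced_nodes_injective (hlγ.trans hγr).ne p).injOn
  set L : ℝ[X] := C (γ - xl) + (X - C xl) * C (((xr - γ) - (γ - xl)) / (xr - xl))
  have hL : ∀ x, (γ - xl) + (x - xl) * ((xr - γ) - (γ - xl)) / (xr - xl) = L.eval x := by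
    intro x; simp [L, mul_div_assoc]
  have hLdeg : L.degree ≤ 1 := by simp only [L]; compute_degree
  have hdeg : ∀ f : ℝ[X], f.natDegree ≤ p → f.degree < #(univ : Finset (Fin (p + 1))) := by
    intro f hf
    rw [card_univ, Fintype.card_fin]
    exact (natDegree_le_iff_degree_le.mp hf).trans_lt (by exact_mod_cast p.lt_succ_self)
  simp_rw [hL, Lagrange.sum_add_mul_mul_eval_basis,
    forall_eq_add_sub_abs_mul_iff hlγ hγr hIv₁ hIv₂]
  obtain ⟨A, B, hA, hB, h₁, h₂⟩ := exists_add_mul_eq_of_eval_eq (hdeg R₁ hdeg₁) (hdeg R₂ hdeg₂)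
    hLdeg ((hIv₁ γ ⟨hlγ.le, le_rfl⟩).symm.trans (hIv₂ γ ⟨le_rfl, hγr.le⟩))
  refine ⟨(fun j => A.eval (t j), fun j => B.eval (t j)), ?_, ?_⟩
  · dsimp only
    rw [← Lagrange.eq_interpolate ht hA, ← Lagrange.eq_interpolate ht hB]
    exact ⟨h₁, h₂⟩
  · rintro ⟨c₁, c₂⟩ ⟨e₁, e₂⟩
    obtain ⟨rfl, rfl⟩ :=
      eq_and_eq_of_add_mul_eq (X_sub_C_ne_zero γ) (e₁.trans h₁.symm) (e₂.trans h₂.symm)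
    ext j <;> exact (Lagrange.eval_interpolate_at_node _ ht (mem_univ j)).symm

/-- existence and uniqueness of the coefficients `α_j, β_j` representing the
piecewise polynomial interpolant `I v` of a continuous function `v` on an element containing an
interface `γ`, in terms of the Lagrange basis `φ_j` and the SGFEM enrichment function
`w_τ = I_h^1 w* − w*`, `w*(x) = |x − γ|`. -/
theorem stmt1 (p : ℕ) (hp : 1 ≤ p) (xl xr γ : ℝ) (hlr : xl < xr) (hγ : γ ∈ Set.Ioo xl xr)
    (v Iv : ℝ → ℝ) (hv : ContinuousOn v (Set.Icc xl xr))
    (hIvcont : ContinuousOn Iv (Set.Icc xl xr))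
    (R₁ R₂ : Polynomial ℝ) (hdeg₁ : R₁.natDegree ≤ p) (hdeg₂ : R₂.natDegree ≤ p)
    (hIv₁ : ∀ x ∈ Set.Icc xl γ, Iv x = R₁.eval x)
    (hIv₂ : ∀ x ∈ Set.Icc γ xr, Iv x = R₂.eval x)
    (hint₁ : ∀ i : ℕ, i ≤ p → Iv (xl + i * (γ - xl) / p) = v (xl + i * (γ - xl) / p))
    (hint₂ : ∀ i : ℕ, i ≤ p → Iv (γ + i * (xr - γ) / p) = v (γ + i * (xr - γ) / p)) :
    ∃! c : (Fin (p + 1) → ℝ) × (Fin (p + 1) → ℝ),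
      ∀ x ∈ Set.Icc xl xr,
        Iv x = ∑ j : Fin (p + 1),
          (c.1 j + c.2 j *
              ((γ - xl) + (x - xl) * ((xr - γ) - (γ - xl)) / (xr - xl) - |x - γ|)) *
            (Lagrange.basis Finset.univ
              (fun k : Fin (p + 1) => xl + (k : ℕ) * (xr - xl) / p) j).eval x :=
  stmt1_general p xl xr γ hγ Iv R₁ R₂ hdeg₁ hdeg₂ hIv₁ hIv₂
end

section
/- Under the hypotheses of the discrete existence theorem, if in addition C_L C₀⁻² C_Ω ‖f‖_{L²(Ω)} < 1, then the solution u_h ∈ V of the discrete quasilinear problem a(u_h; u_h, w_h) = ℓ(w_h) for all w_h ∈ V is unique. -/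
open MeasureTheory

/-- A concrete model of `H¹₀(0, L)`. -/
def H10 (L : ℝ) : Set (ℝ → ℝ) :=
  {w | ContinuousOn w (Set.Icc 0 L) ∧ w 0 = 0 ∧ w L = 0 ∧
    (∀ x ∈ Set.Ioo 0 L, DifferentiableAt ℝ w x) ∧
    IntervalIntegrable (deriv w) volume 0 L ∧
    IntervalIntegrable (fun x => (deriv w x) ^ 2) volume 0 L ∧
    IntervalIntegrable (fun x => (w x) ^ 2) volume 0 L}

/-- The quasilinear form `a(v; z, w) = Σ_j ∫_{Ω_j} κ_j(x, v(x)) z'(x) w'(x) dx`. -/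
noncomputable def formA (m : ℕ) (s : ℕ → ℝ) (κ : ℕ → ℝ → ℝ → ℝ) (v z w : ℝ → ℝ) : ℝ :=
  ∑ j ∈ Finset.range (m + 1), ∫ x in (s j)..(s (j + 1)), κ j x (v x) * deriv z x * deriv w x

/-!
Write `e = u₁ - u₂` and `|w|₁ = ‖w'‖_{L²}`. Testing both Galerkin equations with `e` and
subtracting gives `a(u₁; e, e) = Σⱼ ∫ (κⱼ(u₂) - κⱼ(u₁)) u₂' e'`. The Lipschitz bound, the
embedding `‖e‖_∞ ≤ C_Ω |e|₁` and Cauchy–Schwarz bound the right side by `C_L C_Ω |u₂|₁ |e|₁²`,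
coercivity bounds the left side below by `C₀ |e|₁²`, and testing the equation for `u₂` with `u₂`
gives the a priori bound `C₀ |u₂|₁ ≤ ‖f‖`. The smallness condition then forces `|e|₁ = 0`, so
`e = 0` by the embedding once more.
-/

open Set intervalIntegral

theorem integral_abs_mul_le_sqrt_mul_sqrt {α : Type*} [MeasurableSpace α] {μ : Measure α}
    {f g : α → ℝ} (hf : MemLp f 2 μ) (hg : MemLp g 2 μ) :
    ∫ x, |f x * g x| ∂μ ≤ √(∫ x, f x ^ 2 ∂μ) * √(∫ x, g x ^ 2 ∂μ) := by
  have h := integral_mul_norm_le_Lp_mul_Lq (p := 2) (q := 2) Real.HolderConjugate.two_two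
    (by simpa using hf) (by simpa using hg)
  simpa [Real.sqrt_eq_rpow, abs_mul] using h

theorem intervalIntegral_abs_mul_le_sqrt_mul_sqrt {a b : ℝ} (hab : a ≤ b) {f g : ℝ → ℝ}
    (hf : MemLp f 2 (volume.restrict (Ioc a b))) (hg : MemLp g 2 (volume.restrict (Ioc a b))) :
    ∫ x in a..b, |f x * g x| ≤ √(∫ x in a..b, f x ^ 2) * √(∫ x in a..b, g x ^ 2) := by
  simpa only [integral_of_le hab] using integral_abs_mul_le_sqrt_mul_sqrt hf hg

theorem memLp_two_of_intervalIntegrable_sq {a b : ℝ} (hab : a ≤ b) {g : ℝ → ℝ}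
    (hg : AEStronglyMeasurable g (volume.restrict (Ioc a b)))
    (hg2 : IntervalIntegrable (fun x => g x ^ 2) volume a b) :
    MemLp g 2 (volume.restrict (Ioc a b)) :=
  (memLp_two_iff_integrable_sq hg).2 ((intervalIntegrable_iff_integrableOn_Ioc_of_le hab).1 hg2)

theorem memLp_deriv_of_mem_H10 {L : ℝ} (hL : 0 ≤ L) {w : ℝ → ℝ} (hw : w ∈ H10 L) :
    MemLp (deriv w) 2 (volume.restrict (Ioc 0 L)) := by
  obtain ⟨-, -, -, -, -, hw', -⟩ := hw
  exact memLp_two_of_intervalIntegrable_sq hL (measurable_deriv w).aestronglyMeasurable hw'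

theorem memLp_of_mem_H10 {L : ℝ} (hL : 0 ≤ L) {w : ℝ → ℝ} (hw : w ∈ H10 L) :
    MemLp w 2 (volume.restrict (Ioc 0 L)) := by
  obtain ⟨hcont, -, -, -, -, -, hw'⟩ := hw
  exact memLp_two_of_intervalIntegrable_sq hL
    ((hcont.mono Ioc_subset_Icc_self).aestronglyMeasurable measurableSet_Ioc) hw'

theorem deriv_sub_of_mem_H10 {L : ℝ} {u v : ℝ → ℝ} (hu : u ∈ H10 L) (hv : v ∈ H10 L)
    {x : ℝ} (hx : x ∈ Ioo 0 L) : deriv (u - v) x = deriv u x - deriv v x :=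
  deriv_sub (hu.2.2.2.1 x hx) (hv.2.2.2.1 x hx)

structure IsPartition (L : ℝ) (m : ℕ) (s : ℕ → ℝ) : Prop where
  zero : s 0 = 0
  last : s (m + 1) = L
  mono : ∀ j ≤ m, s j ≤ s (j + 1)

namespace IsPartition

variable {L : ℝ} {m : ℕ} {s : ℕ → ℝ}

theorem monotoneOn (hP : IsPartition L m s) : MonotoneOn s (Iic (m + 1)) :=
  monotoneOn_of_le_succ ordConnected_Iic fun j _ _ hj =>
    by simpa using hP.mono j (by simpa using hj)

theorem mem_Icc (hP : IsPartition L m s) {j : ℕ} (hj : j ≤ m + 1) : s j ∈ Icc 0 L := by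
  constructor
  · simpa [hP.zero] using hP.monotoneOn (Nat.zero_le _) hj (Nat.zero_le j)
  · simpa [hP.last] using hP.monotoneOn hj (le_refl (m + 1)) hj

theorem nonneg (hP : IsPartition L m s) : 0 ≤ L :=
  hP.last ▸ (hP.mem_Icc le_rfl).1

theorem Icc_subset (hP : IsPartition L m s) {j : ℕ} (hj : j ≤ m) :
    Icc (s j) (s (j + 1)) ⊆ Icc 0 L :=
  Icc_subset_Icc (hP.mem_Icc (by omega)).1 (hP.mem_Icc (by omega)).2

theorem uIcc_subset (hP : IsPartition L m s) {j : ℕ} (hj : j ≤ m) :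
    uIcc (s j) (s (j + 1)) ⊆ uIcc 0 L := by
  simpa only [uIcc_of_le (hP.mono j hj), uIcc_of_le hP.nonneg] using hP.Icc_subset hj

theorem Ioo_subset (hP : IsPartition L m s) {j : ℕ} (hj : j ≤ m) :
    Ioo (s j) (s (j + 1)) ⊆ Ioo 0 L :=
  Ioo_subset_Ioo (hP.mem_Icc (by omega)).1 (hP.mem_Icc (by omega)).2

theorem sum_integral_le (hP : IsPartition L m s) {g : ℕ → ℝ → ℝ} {G : ℝ → ℝ}
    (hg : ∀ j ≤ m, IntervalIntegrable (g j) volume (s j) (s (j + 1)))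
    (hG : IntervalIntegrable G volume 0 L)
    (hgG : ∀ j ≤ m, ∀ x ∈ Ioo (s j) (s (j + 1)), g j x ≤ G x) :
    ∑ j ∈ Finset.range (m + 1), ∫ x in s j..s (j + 1), g j x ≤ ∫ x in 0..L, G x := by
  have hGj : ∀ j ≤ m, IntervalIntegrable G volume (s j) (s (j + 1)) :=
    fun j hj => hG.mono_set (hP.uIcc_subset hj)
  calc ∑ j ∈ Finset.range (m + 1), ∫ x in s j..s (j + 1), g j x
      ≤ ∑ j ∈ Finset.range (m + 1), ∫ x in s j..s (j + 1), G x := by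
        refine Finset.sum_le_sum fun j hj => ?_
        have hj : j ≤ m := Nat.lt_succ_iff.1 (Finset.mem_range.1 hj)
        exact integral_mono_on_of_le_Ioo (hP.mono j hj) (hg j hj) (hGj j hj) (hgG j hj)
    _ = ∫ x in 0..L, G x := by
        rw [sum_integral_adjacent_intervals fun j hj => hGj j (Nat.lt_succ_iff.1 hj),
          hP.zero, hP.last]

end IsPartition

theorem IntervalIntegrable.bdd_comp_mul {a b c : ℝ} {P : ℝ → ℝ}
    (hP : IntervalIntegrable P volume a b) {k : ℝ → ℝ → ℝ}
    (hk : Continuous fun q : ℝ × ℝ => k q.1 q.2) (hbd : ∀ x y, |k x y| ≤ c)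
    {v : ℝ → ℝ} (hv : ContinuousOn v (uIcc a b)) :
    IntervalIntegrable (fun x => k x (v x) * P x) volume a b := by
  have hkv : ContinuousOn (fun x => k x (v x)) (uIcc a b) :=
    hk.comp_continuousOn (continuousOn_id.prodMk hv)
  rw [intervalIntegrable_iff] at hP ⊢
  exact hP.bdd_mul ((hkv.aestronglyMeasurable measurableSet_uIcc).mono_set uIoc_subset_uIcc)
    (Filter.Eventually.of_forall fun x => hbd x (v x))

theorem intervalIntegrable_deriv_mul_deriv {L : ℝ} (hL : 0 ≤ L) {z w : ℝ → ℝ}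
    (hz : z ∈ H10 L) (hw : w ∈ H10 L) :
    IntervalIntegrable (fun x => deriv z x * deriv w x) volume 0 L :=
  (intervalIntegrable_iff_integrableOn_Ioc_of_le hL).2
    ((memLp_deriv_of_mem_H10 hL hz).integrable_mul (memLp_deriv_of_mem_H10 hL hw))

section formA

variable {L : ℝ} {m : ℕ} {s : ℕ → ℝ} {κ : ℕ → ℝ → ℝ → ℝ} {κmin κmax : ℝ}
  {v₁ v₂ z₁ z₂ w : ℝ → ℝ}

theorem intervalIntegrable_formA_integrand (hP : IsPartition L m s)
    (hκcont : ∀ j, Continuous (fun q : ℝ × ℝ => κ j q.1 q.2))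
    (hbd : ∀ j x y, κmin ≤ κ j x y ∧ κ j x y ≤ κmax) {v z : ℝ → ℝ}
    (hv : ContinuousOn v (Icc 0 L)) (hz : z ∈ H10 L) (hw : w ∈ H10 L) {j : ℕ} (hj : j ≤ m) :
    IntervalIntegrable (fun x => κ j x (v x) * deriv z x * deriv w x) volume
      (s j) (s (j + 1)) := by
  have hpiece := hP.uIcc_subset hj
  rw [uIcc_of_le hP.nonneg] at hpiece
  have hzw := (intervalIntegrable_deriv_mul_deriv hP.nonneg hz hw).mono_set (hP.uIcc_subset hj)
  simpa only [mul_assoc] using hzw.bdd_comp_mul (hκcont j)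
    (fun x y => abs_le_max_abs_abs (hbd j x y).1 (hbd j x y).2)
    (hv.mono hpiece)

theorem formA_sub_formA_sub_eq (hP : IsPartition L m s)
    (hκcont : ∀ j, Continuous (fun q : ℝ × ℝ => κ j q.1 q.2))
    (hbd : ∀ j x y, κmin ≤ κ j x y ∧ κ j x y ≤ κmax)
    (hv₁ : ContinuousOn v₁ (Icc 0 L)) (hv₂ : ContinuousOn v₂ (Icc 0 L))
    (hz₁ : z₁ ∈ H10 L) (hz₂ : z₂ ∈ H10 L) (hz : z₁ - z₂ ∈ H10 L) (hw : w ∈ H10 L) :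
    formA m s κ v₁ (z₁ - z₂) w - (formA m s κ v₁ z₁ w - formA m s κ v₂ z₂ w) =
      ∑ j ∈ Finset.range (m + 1), ∫ x in s j..s (j + 1),
        (κ j x (v₂ x) - κ j x (v₁ x)) * deriv z₂ x * deriv w x := by
  simp only [formA, ← Finset.sum_sub_distrib]
  refine Finset.sum_congr rfl fun j hj => ?_
  have hj : j ≤ m := Nat.lt_succ_iff.1 (Finset.mem_range.1 hj)
  have hint {v z} (hv : ContinuousOn v (Icc 0 L)) (hz : z ∈ H10 L) :=
    intervalIntegrable_formA_integrand hP hκcont hbd hv hz hw hj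
  rw [← integral_sub (hint hv₁ hz₁) (hint hv₂ hz₂),
    ← integral_sub (hint hv₁ hz) ((hint hv₁ hz₁).sub (hint hv₂ hz₂))]
  refine integral_congr_uIoo fun x hx => ?_
  rw [uIoo_of_le (hP.mono j hj)] at hx
  simp only [deriv_sub_of_mem_H10 hz₁ hz₂ (hP.Ioo_subset hj hx)]
  ring

theorem formA_sub_formA_sub_le (hP : IsPartition L m s)
    (hκcont : ∀ j, Continuous (fun q : ℝ × ℝ => κ j q.1 q.2))
    (hbd : ∀ j x y, κmin ≤ κ j x y ∧ κ j x y ≤ κmax) {CL δ : ℝ} (hCL : 0 ≤ CL)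
    (hlip : ∀ j x y₁ y₂, |κ j x y₁ - κ j x y₂| ≤ CL * |y₁ - y₂|) (hδ : 0 ≤ δ)
    (hv : ∀ x ∈ Icc 0 L, |v₁ x - v₂ x| ≤ δ)
    (hv₁ : ContinuousOn v₁ (Icc 0 L)) (hv₂ : ContinuousOn v₂ (Icc 0 L))
    (hz₁ : z₁ ∈ H10 L) (hz₂ : z₂ ∈ H10 L) (hz : z₁ - z₂ ∈ H10 L) (hw : w ∈ H10 L) :
    formA m s κ v₁ (z₁ - z₂) w - (formA m s κ v₁ z₁ w - formA m s κ v₂ z₂ w) ≤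
      CL * δ * (√(∫ x in 0..L, deriv z₂ x ^ 2) * √(∫ x in 0..L, deriv w x ^ 2)) := by
  have hL := hP.nonneg
  have hint : ∀ j ≤ m, IntervalIntegrable
      (fun x => (κ j x (v₂ x) - κ j x (v₁ x)) * deriv z₂ x * deriv w x) volume
      (s j) (s (j + 1)) := fun j hj => by
    simpa only [sub_mul] using (intervalIntegrable_formA_integrand hP hκcont hbd hv₂ hz₂ hw hj).sub
      (intervalIntegrable_formA_integrand hP hκcont hbd hv₁ hz₂ hw hj)
  have hpointwise : ∀ j ≤ m, ∀ x ∈ Ioo (s j) (s (j + 1)),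
      (κ j x (v₂ x) - κ j x (v₁ x)) * deriv z₂ x * deriv w x ≤
        CL * δ * |deriv z₂ x * deriv w x| := fun j hj x hx => by
    have hκ : |κ j x (v₂ x) - κ j x (v₁ x)| ≤ CL * δ := by
      refine (hlip j x _ _).trans (mul_le_mul_of_nonneg_left ?_ hCL)
      rw [abs_sub_comm]
      exact hv x (Ioo_subset_Icc_self (hP.Ioo_subset hj hx))
    rw [mul_assoc]
    exact (le_abs_self _).trans
      ((abs_mul _ _).trans_le (mul_le_mul_of_nonneg_right hκ (abs_nonneg _)))
  rw [formA_sub_formA_sub_eq hP hκcont hbd hv₁ hv₂ hz₁ hz₂ hz hw]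
  calc _ ≤ ∫ x in 0..L, CL * δ * |deriv z₂ x * deriv w x| :=
        hP.sum_integral_le hint
          ((intervalIntegrable_deriv_mul_deriv hL hz₂ hw).abs.const_mul _) hpointwise
    _ = CL * δ * ∫ x in 0..L, |deriv z₂ x * deriv w x| := integral_const_mul _ _
    _ ≤ _ := mul_le_mul_of_nonneg_left (intervalIntegral_abs_mul_le_sqrt_mul_sqrt hL
        (memLp_deriv_of_mem_H10 hL hz₂) (memLp_deriv_of_mem_H10 hL hw)) (by positivity)

end formA

theorem mul_sqrt_integral_deriv_sq_le {L C₀ : ℝ} (hL : 0 ≤ L) (hC₀ : 0 < C₀) {u f : ℝ → ℝ}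
    (hu : u ∈ H10 L) (hf : MemLp f 2 (volume.restrict (Ioc 0 L)))
    (h : C₀ * ((∫ x in 0..L, u x ^ 2) + ∫ x in 0..L, deriv u x ^ 2) ≤ ∫ x in 0..L, f x * u x) :
    C₀ * √(∫ x in 0..L, deriv u x ^ 2) ≤ √(∫ x in 0..L, f x ^ 2) := by
  set A := √(∫ x in 0..L, u x ^ 2)
  set B := √(∫ x in 0..L, deriv u x ^ 2)
  set F := √(∫ x in 0..L, f x ^ 2)
  have hA : A ^ 2 = ∫ x in 0..L, u x ^ 2 :=
    Real.sq_sqrt (integral_nonneg hL fun _ _ => sq_nonneg _)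
  have hB : B ^ 2 = ∫ x in 0..L, deriv u x ^ 2 :=
    Real.sq_sqrt (integral_nonneg hL fun _ _ => sq_nonneg _)
  have hfu : ∫ x in 0..L, f x * u x ≤ F * A :=
    (le_abs_self _).trans ((abs_integral_le_integral_abs hL).trans
      (intervalIntegral_abs_mul_le_sqrt_mul_sqrt hL hf (memLp_of_mem_H10 hL hu)))
  rw [← hA, ← hB] at h
  have hA0 : 0 ≤ A := Real.sqrt_nonneg _
  have hB0 : 0 ≤ B := Real.sqrt_nonneg _
  have hF0 : 0 ≤ F := Real.sqrt_nonneg _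
  -- if `F < C₀ B`, then `F A ≤ C₀ A B` turns the hypothesis into `A² + B² ≤ A B`, forcing `B = 0`
  by_contra! hlt
  nlinarith [mul_nonneg hA0 (sub_nonneg.2 hlt.le), mul_nonneg hC₀.le (sq_nonneg (A - B / 2)),
    mul_pos (sub_pos.2 hlt) (pos_of_mul_pos_right (hF0.trans_lt hlt) hC₀.le)]

theorem stmt5_general (L : ℝ) (m : ℕ) (s : ℕ → ℝ)
    (hs0 : s 0 = 0) (hsm : s (m + 1) = L) (hmono : ∀ j ≤ m, s j < s (j + 1))
    (κmin κmax CL C₀ CΩ : ℝ)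
    (hCL : 0 ≤ CL) (hC0 : 0 < C₀) (hCΩpos : 0 ≤ CΩ)
    (κ : ℕ → ℝ → ℝ → ℝ)
    (hκcont : ∀ j, Continuous (fun q : ℝ × ℝ => κ j q.1 q.2))
    (hbd : ∀ j x y, κmin ≤ κ j x y ∧ κ j x y ≤ κmax)
    (hlip : ∀ j x y₁ y₂, |κ j x y₁ - κ j x y₂| ≤ CL * |y₁ - y₂|)
    -- coercivity of the form in the full `H¹` norm with constant `C₀`
    (hcoer : ∀ v, ContinuousOn v (Set.Icc 0 L) → ∀ w ∈ H10 L,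
      C₀ * ((∫ x in (0:ℝ)..L, (w x) ^ 2) + ∫ x in (0:ℝ)..L, (deriv w x) ^ 2) ≤
        formA m s κ v w w)
    -- embedding `‖w‖_∞ ≤ C_Ω |w|₁` on `H¹₀(0, L)`
    (hemb : ∀ w ∈ H10 L, ∀ x ∈ Set.Icc 0 L,
      |w x| ≤ CΩ * Real.sqrt (∫ y in (0:ℝ)..L, (deriv w y) ^ 2))
    (f : ℝ → ℝ)
    (hf : IntervalIntegrable f volume 0 L)
    (hf2 : IntervalIntegrable (fun x => (f x) ^ 2) volume 0 L)
    -- smallness condition `C_L C₀⁻² C_Ω ‖f‖ < 1`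
    (hsmall : CL * (C₀ ^ 2)⁻¹ * CΩ * Real.sqrt (∫ x in (0:ℝ)..L, (f x) ^ 2) < 1)
    (V : Submodule ℝ (ℝ → ℝ))
    (hVsub : ∀ w ∈ V, w ∈ H10 L)
    (u₁ u₂ : ℝ → ℝ) (hu₁V : u₁ ∈ V) (hu₂V : u₂ ∈ V)
    (hsol₁ : ∀ w ∈ V, formA m s κ u₁ u₁ w = ∫ x in (0:ℝ)..L, f x * w x)
    (hsol₂ : ∀ w ∈ V, formA m s κ u₂ u₂ w = ∫ x in (0:ℝ)..L, f x * w x) :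
    Set.EqOn u₁ u₂ (Set.Icc 0 L) := by
  have hP : IsPartition L m s := ⟨hs0, hsm, fun j hj => (hmono j hj).le⟩
  have hL := hP.nonneg
  have hu₁ := hVsub u₁ hu₁V
  have hu₂ := hVsub u₂ hu₂V
  have heV : u₁ - u₂ ∈ V := sub_mem hu₁V hu₂V
  have he := hVsub _ heV
  set E := √(∫ x in (0:ℝ)..L, deriv (u₁ - u₂) x ^ 2)
  set U := √(∫ x in (0:ℝ)..L, deriv u₂ x ^ 2)
  set F := √(∫ x in (0:ℝ)..L, f x ^ 2)
  have hupper : formA m s κ u₁ (u₁ - u₂) (u₁ - u₂) ≤ CL * (CΩ * E) * (U * E) := by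
    have h := formA_sub_formA_sub_le hP hκcont hbd hCL hlip (by positivity) (hemb _ he)
      hu₁.1 hu₂.1 hu₁ hu₂ he he
    rwa [hsol₁ _ heV, hsol₂ _ heV, sub_self, sub_zero] at h
  have hlower : C₀ * E ^ 2 ≤ formA m s κ u₁ (u₁ - u₂) (u₁ - u₂) := by
    rw [Real.sq_sqrt (integral_nonneg hL fun _ _ => sq_nonneg _)]
    refine le_trans ?_ (hcoer u₁ hu₁.1 _ he)
    gcongr
    exact le_add_of_nonneg_left (integral_nonneg hL fun _ _ => sq_nonneg _)
  have hU : C₀ * U ≤ F := mul_sqrt_integral_deriv_sq_le hL hC0 hu₂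
    (memLp_two_of_intervalIntegrable_sq hL hf.1.aestronglyMeasurable hf2)
    ((hcoer u₂ hu₂.1 u₂ hu₂).trans_eq (hsol₂ u₂ hu₂V))
  have hsmall' : CL * CΩ * F < C₀ ^ 2 := by
    have h := mul_lt_mul_of_pos_right hsmall (pow_pos hC0 2)
    field_simp at h
    linarith
  have hE : E = 0 := by
    by_contra hE
    have hE2 : 0 < E ^ 2 := pow_pos ((Real.sqrt_nonneg _).lt_of_ne' hE) 2
    nlinarith [mul_le_mul_of_nonneg_left hU (mul_nonneg (mul_nonneg hCL hCΩpos) hE2.le)]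
  intro x hx
  have h : |(u₁ - u₂) x| ≤ CΩ * E := hemb _ he x hx
  simpa [hE, sub_eq_zero] using h

/-- under the smallness condition `C_L C₀⁻² C_Ω ‖f‖ < 1` the discrete Galerkin
solution of the quasilinear problem is unique (Banach fixed point theorem). -/
theorem stmt5 (L : ℝ) (hL : 0 < L) (m : ℕ) (s : ℕ → ℝ)
    (hs0 : s 0 = 0) (hsm : s (m + 1) = L) (hmono : ∀ j ≤ m, s j < s (j + 1))
    (κmin κmax CL C₀ CΩ : ℝ) (hκmin : 0 < κmin) (hκle : κmin ≤ κmax)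
    (hCL : 0 ≤ CL) (hC0 : 0 < C₀) (hCΩpos : 0 ≤ CΩ)
    (κ : ℕ → ℝ → ℝ → ℝ)
    (hκcont : ∀ j, Continuous (fun q : ℝ × ℝ => κ j q.1 q.2))
    (hbd : ∀ j x y, κmin ≤ κ j x y ∧ κ j x y ≤ κmax)
    (hlip : ∀ j x y₁ y₂, |κ j x y₁ - κ j x y₂| ≤ CL * |y₁ - y₂|)
    -- coercivity of the form in the full `H¹` norm with constant `C₀`
    (hcoer : ∀ v, ContinuousOn v (Set.Icc 0 L) → ∀ w ∈ H10 L,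
      C₀ * ((∫ x in (0:ℝ)..L, (w x) ^ 2) + ∫ x in (0:ℝ)..L, (deriv w x) ^ 2) ≤
        formA m s κ v w w)
    -- embedding `‖w‖_∞ ≤ C_Ω |w|₁` on `H¹₀(0, L)`
    (hemb : ∀ w ∈ H10 L, ∀ x ∈ Set.Icc 0 L,
      |w x| ≤ CΩ * Real.sqrt (∫ y in (0:ℝ)..L, (deriv w y) ^ 2))
    (f : ℝ → ℝ)
    (hf : IntervalIntegrable f volume 0 L)
    (hf2 : IntervalIntegrable (fun x => (f x) ^ 2) volume 0 L)
    -- smallness condition `C_L C₀⁻² C_Ω ‖f‖ < 1`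
    (hsmall : CL * (C₀ ^ 2)⁻¹ * CΩ * Real.sqrt (∫ x in (0:ℝ)..L, (f x) ^ 2) < 1)
    (V : Submodule ℝ (ℝ → ℝ)) (hVfin : FiniteDimensional ℝ V)
    (hVsub : ∀ w ∈ V, w ∈ H10 L)
    (u₁ u₂ : ℝ → ℝ) (hu₁V : u₁ ∈ V) (hu₂V : u₂ ∈ V)
    (hsol₁ : ∀ w ∈ V, formA m s κ u₁ u₁ w = ∫ x in (0:ℝ)..L, f x * w x)
    (hsol₂ : ∀ w ∈ V, formA m s κ u₂ u₂ w = ∫ x in (0:ℝ)..L, f x * w x) :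
    Set.EqOn u₁ u₂ (Set.Icc 0 L) :=
  stmt5_general L m s hs0 hsm hmono κmin κmax CL C₀ CΩ hCL hC0 hCΩpos κ hκcont hbd hlip hcoer hemb f
    hf hf2 hsmall V hVsub u₁ u₂ hu₁V hu₂V hsol₁ hsol₂
end

section
/- Let Ω = (0,L), κ_j : Ω_j × ℝ → [κ_min, κ_max] Lipschitz in the second variable with constant C_L, and a(v;z,w) = Σ_j ∫_{Ω_j} κ_j(x,v) z' w' dx. Suppose u_n → u in L²(Ω), u_n ⇀ u weakly in H¹₀(Ω), ‖u_n‖₁ ≤ M for all n, and v ∈ C₀^∞(Ω). Then a(u_n; u_n, v) → a(u; u, v) as n → ∞. -/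
open MeasureTheory

/-- Weak convergence in `H¹₀(0, L)`. -/
def WeakH1Tendsto (L : ℝ) (u : ℕ → ℝ → ℝ) (w : ℝ → ℝ) : Prop :=
  ∀ v ∈ H10 L,
    Filter.Tendsto
      (fun n => (∫ x in (0:ℝ)..L, u n x * v x) +
        ∫ x in (0:ℝ)..L, deriv (u n) x * deriv v x)
      Filter.atTop
      (nhds ((∫ x in (0:ℝ)..L, w x * v x) + ∫ x in (0:ℝ)..L, deriv w x * deriv v x))

open intervalIntegral Filter

lemma cs_interval {a b : ℝ} (hab : a ≤ b) {f g : ℝ → ℝ}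
    (hf2 : IntervalIntegrable (fun x => f x ^ 2) volume a b)
    (hg2 : IntervalIntegrable (fun x => g x ^ 2) volume a b)
    (hfg : IntervalIntegrable (fun x => f x * g x) volume a b) :
    |∫ x in a..b, f x * g x| ≤
      Real.sqrt (∫ x in a..b, f x ^ 2) * Real.sqrt (∫ x in a..b, g x ^ 2) := by
  set A := ∫ x in a..b, f x ^ 2 with hA
  set B := ∫ x in a..b, f x * g x with hB
  set C := ∫ x in a..b, g x ^ 2 with hC
  have hA0 : 0 ≤ A := integral_nonneg hab (fun x _ => sq_nonneg _)
  have hC0 : 0 ≤ C := integral_nonneg hab (fun x _ => sq_nonneg _)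
  have key : ∀ t : ℝ, 0 ≤ C * (t * t) + (2 * B) * t + A := by
    intro t
    have h1 : (∫ x in a..b, (g x * t + f x) ^ 2) = C * (t * t) + (2 * B) * t + A := by
      have : (fun x => (g x * t + f x) ^ 2) =
          (fun x => (g x ^ 2) * (t * t) + (f x * g x) * (2 * t) + f x ^ 2) := by
        funext x; ring
      rw [this]
      rw [integral_add (((hg2.mul_const _).add (hfg.mul_const _))) hf2,
        integral_add (hg2.mul_const _) (hfg.mul_const _),
        intervalIntegral.integral_mul_const, intervalIntegral.integral_mul_const]
      ring
    rw [← h1]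
    exact integral_nonneg hab (fun x _ => sq_nonneg _)
  have hdisc : discrim C (2 * B) A ≤ 0 := discrim_le_zero key
  rw [discrim] at hdisc
  have hB2 : B ^ 2 ≤ A * C := by nlinarith
  calc |B| = Real.sqrt (B ^ 2) := (Real.sqrt_sq_eq_abs B).symm
    _ ≤ Real.sqrt (A * C) := Real.sqrt_le_sqrt hB2
    _ = Real.sqrt A * Real.sqrt C := Real.sqrt_mul hA0 C

lemma sub_Icc {L a b : ℝ} (hL : 0 ≤ L) (ha : a ∈ Set.Icc 0 L) (hb : b ∈ Set.Icc 0 L) :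
    Set.uIcc a b ⊆ Set.Icc 0 L := by
  rw [← Set.uIcc_of_le hL]
  exact Set.uIcc_subset_uIcc (by rwa [Set.uIcc_of_le hL]) (by rwa [Set.uIcc_of_le hL])

lemma H10_deriv_II {L : ℝ} (hL : 0 ≤ L) {w : ℝ → ℝ} (hw : w ∈ H10 L)
    {a b : ℝ} (ha : a ∈ Set.Icc 0 L) (hb : b ∈ Set.Icc 0 L) :
    IntervalIntegrable (deriv w) volume a b :=
  hw.2.2.2.2.1.mono_set (by rw [Set.uIcc_of_le hL]; exact sub_Icc hL ha hb)

lemma H10_ftc {L : ℝ} (hL : 0 ≤ L) {w : ℝ → ℝ} (hw : w ∈ H10 L)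
    {a b : ℝ} (ha : a ∈ Set.Icc 0 L) (hb : b ∈ Set.Icc 0 L) (hab : a ≤ b) :
    ∫ x in a..b, deriv w x = w b - w a := by
  refine integral_eq_sub_of_hasDerivAt_of_le hab
    (hw.1.mono (Set.Icc_subset_Icc ha.1 hb.2)) (fun x hx => ?_) (H10_deriv_II hL hw ha hb)
  exact (hw.2.2.2.1 x ⟨lt_of_le_of_lt ha.1 hx.1, lt_of_lt_of_le hx.2 hb.2⟩).hasDerivAt

lemma sq_int_mono {L : ℝ} {f : ℝ → ℝ}
    (hf : IntervalIntegrable (fun x => f x ^ 2) volume 0 L)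
    {a b : ℝ} (ha : 0 ≤ a) (hab : a ≤ b) (hbL : b ≤ L) :
    (∫ x in a..b, f x ^ 2) ≤ ∫ x in (0:ℝ)..L, f x ^ 2 :=
  integral_mono_interval ha hab hbL (Filter.Eventually.of_forall fun x => sq_nonneg _) hf

lemma H10_ptwise {L : ℝ} (hL : 0 < L) {u : ℕ → ℝ → ℝ} {ulim : ℝ → ℝ} {M : ℝ}
    (hu : ∀ n, u n ∈ H10 L) (hulim : ulim ∈ H10 L)
    (hL2 : Tendsto (fun n => ∫ x in (0:ℝ)..L, (u n x - ulim x) ^ 2) atTop (nhds 0))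
    (hMd : ∀ n, Real.sqrt (∫ x in (0:ℝ)..L, (deriv (u n) x) ^ 2) ≤ M)
    {p : ℝ} (hp : p ∈ Set.Icc 0 L) :
    Tendsto (fun n => u n p) atTop (nhds (ulim p)) := by
  have hM0 : 0 ≤ M := le_trans (Real.sqrt_nonneg _) (hMd 0)
  rcases eq_or_lt_of_le hp.2 with hpL | hpL
  · have h1 : (fun n => u n p) = fun _ => (0:ℝ) := funext fun n => by
      rw [hpL]; exact (hu n).2.2.1
    have h2 : ulim p = 0 := by rw [hpL]; exact hulim.2.2.1
    rw [h1, h2]; exact tendsto_const_nhds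
  -- p < L
  set E : ℕ → ℝ := fun n => ∫ x in (0:ℝ)..L, (u n x - ulim x) ^ 2 with hEdef
  have hEs : Tendsto (fun n => Real.sqrt (E n)) atTop (nhds 0) := by
    have := (Real.continuous_sqrt.tendsto 0).comp hL2
    simpa [Function.comp_def] using this
  rw [Metric.tendsto_atTop]
  intro ε hε
  have hcw : ContinuousWithinAt ulim (Set.Icc 0 L) p := hulim.1 p hp
  rw [Metric.continuousWithinAt_iff] at hcw
  obtain ⟨δ₂, hδ₂pos, hδ₂⟩ := hcw (ε/4) (by linarith)
  set δ := min (L - p) (min (δ₂/2) ((ε / (4 * (M+1)))^2)) with hδdef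
  have hδpos : 0 < δ := lt_min (by linarith) (lt_min (by linarith) (by positivity))
  have hδLp : δ ≤ L - p := min_le_left _ _
  have hδδ₂ : δ < δ₂ := lt_of_le_of_lt (le_trans (min_le_right _ _) (min_le_left _ _)) (by linarith)
  have hδM : δ ≤ (ε/(4*(M+1)))^2 := le_trans (min_le_right _ _) (min_le_right _ _)
  have hq : p + δ ≤ L := by linarith
  have hpmem : p ∈ Set.Icc 0 L := hp
  have hqmem : p + δ ∈ Set.Icc 0 L := ⟨by linarith [hp.1, hδpos.le], hq⟩
  have hMsd : M * Real.sqrt δ ≤ ε/4 := by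
    have hs : Real.sqrt δ ≤ ε/(4*(M+1)) := by
      calc Real.sqrt δ ≤ Real.sqrt ((ε/(4*(M+1)))^2) := Real.sqrt_le_sqrt hδM
        _ = ε/(4*(M+1)) := Real.sqrt_sq (by positivity)
    have h1 : M * Real.sqrt δ ≤ M * (ε/(4*(M+1))) :=
      mul_le_mul_of_nonneg_left hs hM0
    have h2 : M * (ε/(4*(M+1))) ≤ ε/4 := by
      rw [mul_div_assoc', div_le_div_iff₀ (by positivity) (by norm_num : (0:ℝ) < 4)]
      nlinarith
    linarith
  -- oscillation bound
  have hosc : ∀ n, ∀ x ∈ Set.Icc p (p+δ), |u n x - u n p| ≤ M * Real.sqrt δ := by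
    intro n x hx
    have hxm : x ∈ Set.Icc 0 L := ⟨le_trans hpmem.1 hx.1, le_trans hx.2 hq⟩
    have hftc := H10_ftc hL.le (hu n) hpmem hxm hx.1
    rw [← hftc]
    have hf2 : IntervalIntegrable (fun t => (deriv (u n) t) ^ 2) volume p x :=
      (hu n).2.2.2.2.2.1.mono_set (by rw [Set.uIcc_of_le hL.le]; exact sub_Icc hL.le hpmem hxm)
    have hg2 : IntervalIntegrable (fun _ : ℝ => (1:ℝ) ^ 2) volume p x :=
      intervalIntegrable_const
    have hfg : IntervalIntegrable (fun t => deriv (u n) t * 1) volume p x :=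
      (H10_deriv_II hL.le (hu n) hpmem hxm).mul_const 1
    have hcs := cs_interval hx.1 hf2 hg2 hfg
    simp only [mul_one, one_pow] at hcs
    rw [intervalIntegral.integral_const, smul_eq_mul, mul_one] at hcs
    have hle1 : Real.sqrt (∫ t in p..x, (deriv (u n) t) ^ 2) ≤ M :=
      le_trans (Real.sqrt_le_sqrt (sq_int_mono (hu n).2.2.2.2.2.1 hpmem.1 hx.1 hxm.2)) (hMd n)
    have hle2 : Real.sqrt (x - p) ≤ Real.sqrt δ := Real.sqrt_le_sqrt (by linarith [hx.2])
    calc |∫ t in p..x, deriv (u n) t| ≤ _ := hcs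
      _ ≤ M * Real.sqrt δ :=
        mul_le_mul hle1 hle2 (Real.sqrt_nonneg _) hM0
  -- N from hEs
  have hev : ∀ᶠ n in atTop, Real.sqrt (E n) < (ε/4) * Real.sqrt δ := by
    have hpos : 0 < (ε/4) * Real.sqrt δ := by positivity
    exact (hEs.eventually (eventually_lt_nhds hpos))  -- maybe wrong name
  obtain ⟨N, hN⟩ := eventually_atTop.mp hev
  refine ⟨N, fun n hn => ?_⟩
  have hEn := hN n hn
  -- decomposition
  have hI1int : IntervalIntegrable (fun x => u n p - u n x) volume p (p+δ) :=
    (ContinuousOn.sub continuousOn_const ((hu n).1.mono (sub_Icc hL.le hpmem hqmem))).intervalIntegrable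
  have hI2int : IntervalIntegrable (fun x => u n x - ulim x) volume p (p+δ) :=
    (((hu n).1.mono (sub_Icc hL.le hpmem hqmem)).sub
      (hulim.1.mono (sub_Icc hL.le hpmem hqmem))).intervalIntegrable
  have hI3int : IntervalIntegrable (fun x => ulim x - ulim p) volume p (p+δ) :=
    ((hulim.1.mono (sub_Icc hL.le hpmem hqmem)).sub continuousOn_const).intervalIntegrable
  have hdecomp : u n p - ulim p =
      (1/δ) * ((∫ x in p..p+δ, (u n p - u n x)) + ((∫ x in p..p+δ, (u n x - ulim x)) +
        (∫ x in p..p+δ, (ulim x - ulim p)))) := by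
    rw [← integral_add hI2int hI3int, ← integral_add hI1int (hI2int.add hI3int)]
    have : (fun x => (u n p - u n x) + ((u n x - ulim x) + (ulim x - ulim p))) =
        fun _ => u n p - ulim p := by funext x; ring
    rw [this, intervalIntegral.integral_const, smul_eq_mul,
      show p + δ - p = δ by ring]
    field_simp
  -- bound I1
  have hb1 : |∫ x in p..p+δ, (u n p - u n x)| ≤ (M * Real.sqrt δ) * δ := by
    have h := norm_integral_le_of_norm_le_const (a := p) (b := p+δ)
      (C := M * Real.sqrt δ) (f := fun x => u n p - u n x) ?_
    · rw [Real.norm_eq_abs, show p + δ - p = δ by ring, abs_of_nonneg hδpos.le] at h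
      exact h
    · intro x hx
      rw [Set.uIoc_of_le (by linarith)] at hx
      rw [Real.norm_eq_abs, abs_sub_comm]
      exact hosc n x ⟨hx.1.le, hx.2⟩
  -- bound I2 via CS
  have hb2 : |∫ x in p..p+δ, (u n x - ulim x)| ≤ Real.sqrt (E n) * Real.sqrt δ := by
    have hd2 : IntervalIntegrable (fun x => (u n x - ulim x) ^ 2) volume p (p+δ) :=
      ((((hu n).1.mono (sub_Icc hL.le hpmem hqmem)).sub
        (hulim.1.mono (sub_Icc hL.le hpmem hqmem))).pow 2).intervalIntegrable
    have hd2L : IntervalIntegrable (fun x => (u n x - ulim x) ^ 2) volume 0 L :=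
      ContinuousOn.intervalIntegrable (by
        rw [Set.uIcc_of_le hL.le]; exact (((hu n).1.sub hulim.1).pow 2))
    have hg2 : IntervalIntegrable (fun _ : ℝ => (1:ℝ) ^ 2) volume p (p+δ) :=
      intervalIntegrable_const
    have hfg : IntervalIntegrable (fun x => (u n x - ulim x) * 1) volume p (p+δ) :=
      hI2int.mul_const 1
    have hcs := cs_interval (by linarith : p ≤ p + δ) hd2 hg2 hfg
    simp only [mul_one, one_pow] at hcs
    rw [intervalIntegral.integral_const, smul_eq_mul, mul_one] at hcs
    refine le_trans hcs ?_
    have h1 : Real.sqrt (∫ x in p..p+δ, (u n x - ulim x) ^ 2) ≤ Real.sqrt (E n) :=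
      Real.sqrt_le_sqrt (sq_int_mono hd2L hpmem.1 (by linarith) hq)
    have h2 : Real.sqrt (p + δ - p) = Real.sqrt δ := by rw [show p + δ - p = δ by ring]
    rw [h2]
    exact mul_le_mul_of_nonneg_right h1 (Real.sqrt_nonneg _)
  -- bound I3
  have hb3 : |∫ x in p..p+δ, (ulim x - ulim p)| ≤ (ε/4) * δ := by
    have h := norm_integral_le_of_norm_le_const (a := p) (b := p+δ)
      (C := ε/4) (f := fun x => ulim x - ulim p) ?_
    · rw [Real.norm_eq_abs, show p + δ - p = δ by ring, abs_of_nonneg hδpos.le] at h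
      exact h
    · intro x hx
      rw [Set.uIoc_of_le (by linarith)] at hx
      have hxm : x ∈ Set.Icc 0 L := ⟨by linarith [hx.1, hp.1], by linarith [hx.2]⟩
      have hdist : dist x p < δ₂ := by
        rw [Real.dist_eq, abs_of_nonneg (by linarith [hx.1] : (0:ℝ) ≤ x - p)]
        linarith [hx.2]
      have := hδ₂ hxm hdist
      rw [Real.dist_eq] at this
      rw [Real.norm_eq_abs]
      exact this.le
  -- combine
  rw [Real.dist_eq]
  have habs : |u n p - ulim p| ≤ (1/δ) * ((M * Real.sqrt δ) * δ +
      (Real.sqrt (E n) * Real.sqrt δ + (ε/4) * δ)) := by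
    rw [hdecomp, abs_mul, abs_of_nonneg (by positivity : (0:ℝ) ≤ 1/δ)]
    refine mul_le_mul_of_nonneg_left ?_ (by positivity)
    refine le_trans (abs_add_le _ _) ?_
    refine add_le_add hb1 (le_trans (abs_add_le _ _) (add_le_add hb2 hb3))
  have hsq : Real.sqrt δ * Real.sqrt δ = δ := Real.mul_self_sqrt hδpos.le
  have hE' : Real.sqrt (E n) * Real.sqrt δ < (ε/4) * δ := by
    calc Real.sqrt (E n) * Real.sqrt δ < ((ε/4) * Real.sqrt δ) * Real.sqrt δ :=
          mul_lt_mul_of_pos_right hEn (Real.sqrt_pos.mpr hδpos)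
      _ = (ε/4) * δ := by rw [mul_assoc, hsq]
  calc |u n p - ulim p| ≤ _ := habs
    _ < (1/δ) * ((ε/4) * δ + ((ε/4) * δ + (ε/4) * δ)) := by
        refine mul_lt_mul_of_pos_left ?_ (by positivity)
        have h1 : (M * Real.sqrt δ) * δ ≤ (ε/4) * δ :=
          mul_le_mul_of_nonneg_right hMsd hδpos.le
        linarith
    _ = 3 * (ε/4) := by field_simp; ring
    _ < ε := by linarith


/-- if `u_n → u` in `L²`, `u_n ⇀ u` weakly in `H¹₀`, `‖u_n‖₁ ≤ M`, and `v` is a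
smooth compactly supported test function, then `a(u_n; u_n, v) → a(u; u, v)`. -/
theorem stmt7 (L : ℝ) (hL : 0 < L) (m : ℕ) (s : ℕ → ℝ)
    (hs0 : s 0 = 0) (hsm : s (m + 1) = L) (hmono : ∀ j ≤ m, s j < s (j + 1))
    (κmin κmax CL : ℝ) (hκmin : 0 < κmin) (hκle : κmin ≤ κmax) (hCL : 0 ≤ CL)
    (κ : ℕ → ℝ → ℝ → ℝ)
    (hκcont : ∀ j, Continuous (fun q : ℝ × ℝ => κ j q.1 q.2))
    (hbd : ∀ j x y, κmin ≤ κ j x y ∧ κ j x y ≤ κmax)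
    (hlip : ∀ j x y₁ y₂, |κ j x y₁ - κ j x y₂| ≤ CL * |y₁ - y₂|)
    (u : ℕ → ℝ → ℝ) (ulim : ℝ → ℝ) (M : ℝ)
    (hu : ∀ n, u n ∈ H10 L) (hulim : ulim ∈ H10 L)
    (hL2 : Filter.Tendsto (fun n => ∫ x in (0:ℝ)..L, (u n x - ulim x) ^ 2)
      Filter.atTop (nhds 0))
    (hweak : WeakH1Tendsto L u ulim)
    (hMbd : ∀ n,
      Real.sqrt ((∫ x in (0:ℝ)..L, (u n x) ^ 2) + ∫ x in (0:ℝ)..L, (deriv (u n) x) ^ 2) ≤ M)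
    (v : ℝ → ℝ) (hv : ContDiff ℝ (⊤ : ℕ∞) v) (hvsupp : tsupport v ⊆ Set.Ioo 0 L) :
    Filter.Tendsto (fun n => formA m s κ (u n) (u n) v)
      Filter.atTop (nhds (formA m s κ ulim ulim v)) := by
  have hL0 : (0:ℝ) ≤ L := hL.le
  have hM0 : 0 ≤ M := le_trans (Real.sqrt_nonneg _) (hMbd 0)
  have hMd : ∀ n, Real.sqrt (∫ x in (0:ℝ)..L, (deriv (u n) x) ^ 2) ≤ M := by
    intro n
    refine le_trans (Real.sqrt_le_sqrt ?_) (hMbd n)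
    have h0 : (0:ℝ) ≤ ∫ x in (0:ℝ)..L, (u n x) ^ 2 :=
      integral_nonneg hL0 fun x _ => sq_nonneg _
    linarith
  set E : ℕ → ℝ := fun n => ∫ x in (0:ℝ)..L, (u n x - ulim x) ^ 2 with hEdef
  have hEs : Tendsto (fun n => Real.sqrt (E n)) atTop (nhds 0) := by
    have := (Real.continuous_sqrt.tendsto 0).comp hL2
    simpa [Function.comp_def] using this
  have hvC : Continuous (deriv v) := hv.continuous_deriv (by simp)
  obtain ⟨K, hK⟩ : ∃ K, ∀ x, |deriv v x| ≤ K := by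
    have hcs : HasCompactSupport v := by
      apply HasCompactSupport.intro (isCompact_Icc (a := (0:ℝ)) (b := L))
      intro x hx
      by_contra h
      exact hx (Set.Ioo_subset_Icc_self (hvsupp (subset_tsupport v h)))
    have hcsd : HasCompactSupport (deriv v) := hcs.deriv
    obtain ⟨x0, hx0⟩ := hvC.norm.exists_forall_ge_of_hasCompactSupport hcsd.norm
    exact ⟨‖deriv v x0‖, fun x => by rw [← Real.norm_eq_abs]; exact hx0 x⟩
  have hK0 : 0 ≤ K := le_trans (abs_nonneg _) (hK 0)
  have key : ∀ k, k ≤ m + 1 → ∀ j, j ≤ k → s j ≤ s k := by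
    intro k
    induction k with
    | zero => intro _ j hj; have : j = 0 := Nat.le_zero.mp hj; simp [this]
    | succ k ih =>
      intro hk j hj
      by_cases hjk : j ≤ k
      · exact le_trans (ih (by omega) j hjk) (hmono k (by omega)).le
      · have : j = k + 1 := by omega
        simp [this]
  have hmem : ∀ j, j ≤ m + 1 → s j ∈ Set.Icc 0 L := fun j hj =>
    ⟨hs0 ▸ key j hj 0 (Nat.zero_le j), hsm ▸ key (m+1) le_rfl j hj⟩
  unfold formA
  apply tendsto_finset_sum
  intro j hjmem
  have hj : j ≤ m := Nat.lt_succ_iff.mp (Finset.mem_range.mp hjmem)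
  set a := s j with hadef
  set b := s (j+1) with hbdef
  have hamem : a ∈ Set.Icc 0 L := hmem j (by omega)
  have hbmem : b ∈ Set.Icc 0 L := hmem (j+1) (by omega)
  have hab : a ≤ b := (hmono j hj).le
  have huIcc : Set.uIcc a b = Set.Icc a b := Set.uIcc_of_le hab
  -- projection and g
  set proj : ℝ → ℝ := fun x => max a (min x b) with hprojdef
  have hprojmem : ∀ x, proj x ∈ Set.Icc 0 L := fun x =>
    ⟨le_trans hamem.1 (le_max_left _ _),
     max_le hamem.2 (le_trans (min_le_right _ _) hbmem.2)⟩
  have hprojcont : Continuous proj :=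
    continuous_const.max (continuous_id.min continuous_const)
  have hulimproj : Continuous (fun x => ulim (proj x)) :=
    hulim.1.comp_continuous hprojcont hprojmem
  set g : ℝ → ℝ := fun x => κ j (proj x) (ulim (proj x)) * deriv v (proj x) with hgdef
  have hgcont : Continuous g := by
    have h1 : Continuous (fun x => κ j (proj x) (ulim (proj x))) :=
      (hκcont j).comp (hprojcont.prodMk hulimproj)
    exact h1.mul (hvC.comp hprojcont)
  have hproja : proj a = a := by
    rw [hprojdef]; simp only [min_eq_left hab, max_self]
  have hprojb : proj b = b := by
    rw [hprojdef]; simp only [min_self, max_eq_right hab]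
  have hgeqa : ∀ x, x ≤ a → g x = g a := by
    intro x hx
    have h1 : proj x = a := by
      rw [hprojdef]; simp only [min_eq_left (le_trans hx hab), max_eq_left hx]
    rw [hgdef]; simp only [h1, hproja]
  have hgeqb : ∀ x, b ≤ x → g x = g b := by
    intro x hx
    have h1 : proj x = b := by
      rw [hprojdef]
      simp only [min_eq_right hx, max_eq_right hab]
    rw [hgdef]; simp only [h1, hprojb]
  have hgeq : ∀ x ∈ Set.uIcc a b, g x = κ j x (ulim x) * deriv v x := by
    intro x hx
    rw [huIcc] at hx
    have h1 : proj x = x := by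
      rw [hprojdef]; simp only [min_eq_left hx.2, max_eq_right hx.1]
    rw [hgdef]; simp only [h1]
  -- test function W
  set c : ℝ := (∫ t in (0:ℝ)..L, g t) / L with hcdef
  set G : ℝ → ℝ := fun x => ∫ t in (0:ℝ)..x, g t with hGdef
  have hG : ∀ x, HasDerivAt G (g x) x := fun x =>
    intervalIntegral.integral_hasDerivAt_right (hgcont.intervalIntegrable _ _)
      (hgcont.stronglyMeasurable.stronglyMeasurableAtFilter) hgcont.continuousAt
  set W : ℝ → ℝ := fun x => G x - x * c with hWdef
  have hW : ∀ x, HasDerivAt W (g x - c) x := fun x => (hG x).sub (hasDerivAt_mul_const c)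
  have hWc : Continuous W := by
    rw [continuous_iff_continuousAt]
    exact fun x => (hW x).differentiableAt.continuousAt
  have hWderiv : deriv W = fun x => g x - c := funext fun x => (hW x).deriv
  have hWH10 : W ∈ H10 L := by
    refine ⟨hWc.continuousOn, ?_, ?_, fun x _ => (hW x).differentiableAt, ?_, ?_, ?_⟩
    · show G 0 - 0 * c = 0
      rw [hGdef]; simp
    · show G L - L * c = 0
      rw [hcdef, hGdef]
      field_simp
      ring
    · rw [hWderiv]; exact (hgcont.sub continuous_const).intervalIntegrable _ _
    · rw [hWderiv]; exact ((hgcont.sub continuous_const).pow 2).intervalIntegrable _ _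
    · exact (hWc.pow 2).intervalIntegrable _ _
  -- weak convergence of derivative pairing
  have hA : Tendsto (fun n => ∫ x in (0:ℝ)..L, u n x * W x) atTop
      (nhds (∫ x in (0:ℝ)..L, ulim x * W x)) := by
    have hdiff : Tendsto (fun n => ∫ x in (0:ℝ)..L, (u n x - ulim x) * W x) atTop
        (nhds 0) := by
      apply squeeze_zero_norm
        (a := fun n => Real.sqrt (E n) * Real.sqrt (∫ x in (0:ℝ)..L, (W x) ^ 2))
      · intro n
        rw [Real.norm_eq_abs]
        refine cs_interval hL0 ?_ ?_ ?_
        · exact ContinuousOn.intervalIntegrable (by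
            rw [Set.uIcc_of_le hL0]; exact (((hu n).1.sub hulim.1).pow 2))
        · exact ((hWc.pow 2)).intervalIntegrable _ _
        · exact ContinuousOn.intervalIntegrable (by
            rw [Set.uIcc_of_le hL0]
            exact (((hu n).1.sub hulim.1).mul hWc.continuousOn))
      · simpa using hEs.mul_const (Real.sqrt (∫ x in (0:ℝ)..L, (W x) ^ 2))
    have heq : ∀ n, ∫ x in (0:ℝ)..L, u n x * W x =
        (∫ x in (0:ℝ)..L, (u n x - ulim x) * W x) + ∫ x in (0:ℝ)..L, ulim x * W x := by
      intro n
      have h1 : IntervalIntegrable (fun x => (u n x - ulim x) * W x) volume 0 L :=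
        ContinuousOn.intervalIntegrable (by
          rw [Set.uIcc_of_le hL0]
          exact ((hu n).1.sub hulim.1).mul hWc.continuousOn)
      have h2 : IntervalIntegrable (fun x => ulim x * W x) volume 0 L :=
        ContinuousOn.intervalIntegrable (by
          rw [Set.uIcc_of_le hL0]; exact hulim.1.mul hWc.continuousOn)
      rw [← integral_add h1 h2]
      apply integral_congr
      intro x _
      simp only []
      ring
    have := hdiff.add_const (∫ x in (0:ℝ)..L, ulim x * W x)
    rw [zero_add] at this
    exact Tendsto.congr (fun n => (heq n).symm) this
  have hB : Tendsto (fun n => ∫ x in (0:ℝ)..L, deriv (u n) x * deriv W x) atTop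
      (nhds (∫ x in (0:ℝ)..L, deriv ulim x * deriv W x)) := by
    have h := (hweak W hWH10).sub hA
    simpa using h
  -- splitting identity
  have hint : ∀ (w : ℝ → ℝ), w ∈ H10 L → ∀ p q : ℝ, p ∈ Set.Icc 0 L → q ∈ Set.Icc 0 L →
      IntervalIntegrable (fun x => deriv w x * g x) volume p q := fun w hw p q hp hq =>
    (H10_deriv_II hL0 hw hp hq).mul_continuousOn hgcont.continuousOn
  have h0mem : (0:ℝ) ∈ Set.Icc 0 L := ⟨le_rfl, hL0⟩
  have hLmem : L ∈ Set.Icc 0 L := ⟨hL0, le_rfl⟩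
  have hsplit : ∀ (w : ℝ → ℝ), w ∈ H10 L →
      ∫ x in (0:ℝ)..L, deriv w x * deriv W x =
        (∫ x in a..b, deriv w x * g x) + (w a * g a - w b * g b) := by
    intro w hw
    have step1 : ∫ x in (0:ℝ)..L, deriv w x * deriv W x
        = ∫ x in (0:ℝ)..L, (deriv w x * g x - c * deriv w x) := by
      apply integral_congr
      intro x _
      simp only [hWderiv]
      ring
    have step2 : ∫ x in (0:ℝ)..L, (deriv w x * g x - c * deriv w x)
        = (∫ x in (0:ℝ)..L, deriv w x * g x) - c * ∫ x in (0:ℝ)..L, deriv w x := by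
      rw [integral_sub (hint w hw 0 L h0mem hLmem) ((H10_deriv_II hL0 hw h0mem hLmem).const_mul c),
        intervalIntegral.integral_const_mul]
    have step3 : c * ∫ x in (0:ℝ)..L, deriv w x = 0 := by
      rw [H10_ftc hL0 hw h0mem hLmem hL0, hw.2.1, hw.2.2.1]
      ring
    have hsplit1 : (∫ x in (0:ℝ)..a, deriv w x * g x) + (∫ x in a..b, deriv w x * g x)
        = ∫ x in (0:ℝ)..b, deriv w x * g x :=
      integral_add_adjacent_intervals (hint w hw 0 a h0mem hamem) (hint w hw a b hamem hbmem)
    have hsplit2 : (∫ x in (0:ℝ)..b, deriv w x * g x) + (∫ x in b..L, deriv w x * g x)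
        = ∫ x in (0:ℝ)..L, deriv w x * g x :=
      integral_add_adjacent_intervals (hint w hw 0 b h0mem hbmem) (hint w hw b L hbmem hLmem)
    have hpa : ∫ x in (0:ℝ)..a, deriv w x * g x = w a * g a := by
      have hcongr : ∫ x in (0:ℝ)..a, deriv w x * g x = ∫ x in (0:ℝ)..a, deriv w x * g a := by
        apply integral_congr
        intro x hx
        rw [Set.uIcc_of_le hamem.1] at hx
        simp only [hgeqa x hx.2]
      rw [hcongr, intervalIntegral.integral_mul_const, H10_ftc hL0 hw h0mem hamem hamem.1, hw.2.1]
      ring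
    have hpb : ∫ x in b..L, deriv w x * g x = - (w b * g b) := by
      have hcongr : ∫ x in b..L, deriv w x * g x = ∫ x in b..L, deriv w x * g b := by
        apply integral_congr
        intro x hx
        rw [Set.uIcc_of_le hbmem.2] at hx
        simp only [hgeqb x hx.1]
      rw [hcongr, intervalIntegral.integral_mul_const, H10_ftc hL0 hw hbmem hLmem hbmem.2, hw.2.2.1]
      ring
    rw [step1, step2, step3, sub_zero, ← hsplit2, ← hsplit1, hpa, hpb]
    ring
  -- limits of boundary values
  have hpt_a : Tendsto (fun n => u n a) atTop (nhds (ulim a)) :=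
    H10_ptwise hL hu hulim hL2 hMd hamem
  have hpt_b : Tendsto (fun n => u n b) atTop (nhds (ulim b)) :=
    H10_ptwise hL hu hulim hL2 hMd hbmem
  -- term 2 limit
  have hrw : ∀ (w : ℝ → ℝ), w ∈ H10 L →
      ∫ x in a..b, κ j x (ulim x) * deriv w x * deriv v x = ∫ x in a..b, deriv w x * g x := by
    intro w hw
    apply integral_congr
    intro x hx
    simp only [hgeq x hx]
    ring
  have hterm2 : Tendsto (fun n => ∫ x in a..b, κ j x (ulim x) * deriv (u n) x * deriv v x)
      atTop (nhds (∫ x in a..b, κ j x (ulim x) * deriv ulim x * deriv v x)) := by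
    have hlim : Tendsto (fun n => (∫ x in (0:ℝ)..L, deriv (u n) x * deriv W x)
        - (u n a * g a - u n b * g b)) atTop
        (nhds ((∫ x in (0:ℝ)..L, deriv ulim x * deriv W x) - (ulim a * g a - ulim b * g b))) :=
      hB.sub ((hpt_a.mul_const (g a)).sub (hpt_b.mul_const (g b)))
    have heqn : ∀ n, ∫ x in a..b, κ j x (ulim x) * deriv (u n) x * deriv v x
        = (∫ x in (0:ℝ)..L, deriv (u n) x * deriv W x) - (u n a * g a - u n b * g b) := by
      intro n
      rw [hrw (u n) (hu n), hsplit (u n) (hu n)]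
      ring
    have heql : ∫ x in a..b, κ j x (ulim x) * deriv ulim x * deriv v x
        = (∫ x in (0:ℝ)..L, deriv ulim x * deriv W x) - (ulim a * g a - ulim b * g b) := by
      rw [hrw ulim hulim, hsplit ulim hulim]
      ring
    rw [heql]
    exact Tendsto.congr (fun n => (heqn n).symm) hlim
  -- term 1 limit
  have hκwcont : ∀ (w : ℝ → ℝ), ContinuousOn w (Set.Icc 0 L) →
      ContinuousOn (fun x => κ j x (w x)) (Set.Icc 0 L) := by
    intro w hw
    exact (hκcont j).comp_continuousOn (continuousOn_id.prodMk hw)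
  have hterm1 : Tendsto
      (fun n => ∫ x in a..b, (κ j x (u n x) - κ j x (ulim x)) * deriv (u n) x * deriv v x)
      atTop (nhds 0) := by
    apply squeeze_zero_norm (a := fun n => (CL * K) * Real.sqrt (E n) * M)
    · intro n
      set φ : ℝ → ℝ := fun x => (κ j x (u n x) - κ j x (ulim x)) * deriv v x with hφdef
      have hφcont : ContinuousOn φ (Set.Icc 0 L) :=
        (((hκwcont (u n) (hu n).1).sub (hκwcont ulim hulim.1)).mul hvC.continuousOn)
      have hcongr1 : ∫ x in a..b, (κ j x (u n x) - κ j x (ulim x)) * deriv (u n) x * deriv v x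
          = ∫ x in a..b, φ x * deriv (u n) x := by
        apply integral_congr
        intro x _
        simp only [hφdef]
        ring
      rw [Real.norm_eq_abs, hcongr1]
      have hφ2 : IntervalIntegrable (fun x => φ x ^ 2) volume a b :=
        ContinuousOn.intervalIntegrable ((hφcont.mono (sub_Icc hL0 hamem hbmem)).pow 2)
      have hd2 : IntervalIntegrable (fun x => (deriv (u n) x) ^ 2) volume a b :=
        (hu n).2.2.2.2.2.1.mono_set (by
          rw [Set.uIcc_of_le hL0]; exact sub_Icc hL0 hamem hbmem)
      have hfg : IntervalIntegrable (fun x => φ x * deriv (u n) x) volume a b :=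
        (H10_deriv_II hL0 (hu n) hamem hbmem).continuousOn_mul
          (hφcont.mono (sub_Icc hL0 hamem hbmem))
      have hcs := cs_interval hab hφ2 hd2 hfg
      refine le_trans hcs ?_
      have hφsq : ∀ x, φ x ^ 2 ≤ (CL * K) ^ 2 * (u n x - ulim x) ^ 2 := by
        intro x
        have e1 : |κ j x (u n x) - κ j x (ulim x)| ≤ CL * |u n x - ulim x| := hlip j x _ _
        have e2 : |deriv v x| ≤ K := hK x
        have e3 : φ x ^ 2 = (κ j x (u n x) - κ j x (ulim x)) ^ 2 * (deriv v x) ^ 2 := by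
          rw [hφdef]; ring
        rw [e3]
        have e4 : (κ j x (u n x) - κ j x (ulim x)) ^ 2 ≤ (CL * |u n x - ulim x|) ^ 2 := by
          rw [← sq_abs]
          exact pow_le_pow_left₀ (abs_nonneg _) e1 2
        have e5 : (deriv v x) ^ 2 ≤ K ^ 2 := by
          rw [← sq_abs]
          exact pow_le_pow_left₀ (abs_nonneg _) e2 2
        have e6 : (0:ℝ) ≤ (κ j x (u n x) - κ j x (ulim x)) ^ 2 := sq_nonneg _
        have e7 : (0:ℝ) ≤ (CL * |u n x - ulim x|) ^ 2 := sq_nonneg _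
        calc (κ j x (u n x) - κ j x (ulim x)) ^ 2 * (deriv v x) ^ 2
            ≤ (CL * |u n x - ulim x|) ^ 2 * K ^ 2 :=
              mul_le_mul e4 e5 (sq_nonneg _) e7
          _ = (CL * K) ^ 2 * (u n x - ulim x) ^ 2 := by
              rw [mul_pow, mul_pow, sq_abs]; ring
      have hfsq : IntervalIntegrable (fun x => (CL * K) ^ 2 * (u n x - ulim x) ^ 2) volume a b :=
        (ContinuousOn.intervalIntegrable
          ((((hu n).1.sub hulim.1).pow 2).mono (sub_Icc hL0 hamem hbmem))).const_mul _
      have hφint1 : (∫ x in a..b, φ x ^ 2)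
          ≤ ∫ x in a..b, (CL * K) ^ 2 * (u n x - ulim x) ^ 2 :=
        integral_mono_on hab hφ2 hfsq (fun x _ => hφsq x)
      have hfsqL : IntervalIntegrable (fun x => (u n x - ulim x) ^ 2) volume 0 L :=
        ContinuousOn.intervalIntegrable (by
          rw [Set.uIcc_of_le hL0]; exact (((hu n).1.sub hulim.1).pow 2))
      have hφint2 : (∫ x in a..b, (CL * K) ^ 2 * (u n x - ulim x) ^ 2)
          ≤ (CL * K) ^ 2 * E n := by
        rw [hEdef]
        calc ∫ x in a..b, (CL * K) ^ 2 * (u n x - ulim x) ^ 2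
            = (CL * K) ^ 2 * ∫ x in a..b, (u n x - ulim x) ^ 2 := integral_const_mul _ _
          _ ≤ (CL * K) ^ 2 * ∫ x in (0:ℝ)..L, (u n x - ulim x) ^ 2 :=
              mul_le_mul_of_nonneg_left (sq_int_mono hfsqL hamem.1 hab hbmem.2) (sq_nonneg _)
      have hs1 : Real.sqrt (∫ x in a..b, φ x ^ 2) ≤ (CL * K) * Real.sqrt (E n) := by
        calc Real.sqrt (∫ x in a..b, φ x ^ 2)
            ≤ Real.sqrt ((CL * K) ^ 2 * E n) := Real.sqrt_le_sqrt (le_trans hφint1 hφint2)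
          _ = (CL * K) * Real.sqrt (E n) := by
              rw [Real.sqrt_mul (sq_nonneg _), Real.sqrt_sq (by positivity)]
      have hs2 : Real.sqrt (∫ x in a..b, (deriv (u n) x) ^ 2) ≤ M :=
        le_trans (Real.sqrt_le_sqrt
          (sq_int_mono (hu n).2.2.2.2.2.1 hamem.1 hab hbmem.2)) (hMd n)
      calc Real.sqrt (∫ x in a..b, φ x ^ 2) * Real.sqrt (∫ x in a..b, (deriv (u n) x) ^ 2)
          ≤ ((CL * K) * Real.sqrt (E n)) * M :=
            mul_le_mul hs1 hs2 (Real.sqrt_nonneg _) (by positivity)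
        _ = (CL * K) * Real.sqrt (E n) * M := by ring
    · have h := (hEs.const_mul (CL * K)).mul_const M
      simpa using h
  -- combining
  have hdec : ∀ n, ∫ x in a..b, κ j x (u n x) * deriv (u n) x * deriv v x
      = (∫ x in a..b, (κ j x (u n x) - κ j x (ulim x)) * deriv (u n) x * deriv v x)
        + ∫ x in a..b, κ j x (ulim x) * deriv (u n) x * deriv v x := by
    intro n
    have h1 : IntervalIntegrable
        (fun x => (κ j x (u n x) - κ j x (ulim x)) * deriv (u n) x * deriv v x) volume a b :=
      ((H10_deriv_II hL0 (hu n) hamem hbmem).continuousOn_mul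
        ((((hκwcont (u n) (hu n).1).sub (hκwcont ulim hulim.1)).mono
          (sub_Icc hL0 hamem hbmem)))).mul_continuousOn (hvC.continuousOn)
    have h2 : IntervalIntegrable
        (fun x => κ j x (ulim x) * deriv (u n) x * deriv v x) volume a b :=
      ((H10_deriv_II hL0 (hu n) hamem hbmem).continuousOn_mul
        (((hκwcont ulim hulim.1)).mono
          (sub_Icc hL0 hamem hbmem))).mul_continuousOn (hvC.continuousOn)
    rw [← integral_add h1 h2]
    apply integral_congr
    intro x _
    simp only []
    ring
  have hfinal := hterm1.add hterm2
  rw [zero_add] at hfinal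
  exact Tendsto.congr (fun n => (hdec n).symm) hfinal
end

section
/- Let v ∈ H^{p+1}(ς) for an interval ς of length at most h, and let q be a polynomial of degree at most p interpolating v at p+1 distinct points of ς̄, with e = v − q. Then for every x ∈ ς̄, |e'(x)| ≤ h^{p−1/2} ‖v^{(p+1)}‖_{L²(ς)}. -/
/-! The error `e = v - q` vanishes at the `p + 1` interpolation points, so by repeated Rolle
every `e^{(k)}` with `k ≤ p` has a zero in `[a, b]`, while `e^{(p+1)} = v^{(p+1)}`. Integrating
from a zero of `e^{(p)}` bounds `e^{(p)}` by `‖v^{(p+1)}‖_{L¹} ≤ √(b - a) ‖v^{(p+1)}‖_{L²}`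
(Cauchy–Schwarz), and each step down from `e^{(k+1)}` to `e^{(k)}`, again starting from a zero,
costs a factor `b - a` by the mean value theorem. -/

open MeasureTheory Set Polynomial

namespace Polynomial

lemma iteratedDeriv_eval (q : ℝ[X]) (n : ℕ) :
    iteratedDeriv n (fun x => q.eval x) = fun x => (derivative^[n] q).eval x := by
  induction n with
  | zero => simp
  | succ n ih =>
    funext x
    rw [iteratedDeriv_succ, ih, Function.iterate_succ_apply']
    exact Polynomial.deriv _

lemma contDiff_eval (q : ℝ[X]) (n : WithTop ℕ∞) : ContDiff ℝ n fun x => q.eval x := by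
  simpa using q.contDiff_aeval (𝕜 := ℝ) n

lemma iteratedDeriv_eval_eq_zero {q : ℝ[X]} {n : ℕ} (hq : q.natDegree < n) :
    iteratedDeriv n (fun x => q.eval x) = 0 := by
  rw [iteratedDeriv_eval, iterate_derivative_eq_zero hq]
  funext x
  exact eval_zero

end Polynomial

lemma iteratedDeriv_sub_eval_of_natDegree_lt {n : ℕ} {v : ℝ → ℝ} (hv : ContDiff ℝ n v)
    {q : ℝ[X]} (hq : q.natDegree < n) :
    iteratedDeriv n (fun y => v y - q.eval y) = iteratedDeriv n v := by
  funext t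
  rw [iteratedDeriv_fun_sub hv.contDiffAt (q.contDiff_eval n).contDiffAt,
    q.iteratedDeriv_eval_eq_zero hq, Pi.zero_apply, sub_zero]

lemma exists_strictMono_deriv_eq_zero {f : ℝ → ℝ} (hf : Continuous f) {n : ℕ}
    {z : Fin (n + 2) → ℝ} (hz : StrictMono z) (hfz : ∀ i, f (z i) = 0) :
    ∃ ξ : Fin (n + 1) → ℝ, StrictMono ξ ∧
      ∀ i, ξ i ∈ Ioo (z i.castSucc) (z i.succ) ∧ deriv f (ξ i) = 0 := by
  -- `deriv f` is `0` wherever `f` is not differentiable, so continuity suffices for Rolle.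
  choose ξ hξ using fun i : Fin (n + 1) =>
    exists_deriv_eq_zero (hz i.castSucc_lt_succ) hf.continuousOn
      ((hfz i.castSucc).trans (hfz i.succ).symm)
  refine ⟨ξ, fun i j hij => ?_, hξ⟩
  calc ξ i < z i.succ := (hξ i).1.2
    _ ≤ z j.castSucc := hz.monotone (Fin.succ_le_castSucc_iff.mpr hij)
    _ < ξ j := (hξ j).1.1

lemma exists_iteratedDeriv_eq_zero {n : ℕ} {f : ℝ → ℝ} (hf : ContDiff ℝ n f) {a b : ℝ}
    {z : Fin (n + 1) → ℝ} (hz : Function.Injective z) (hmem : ∀ i, z i ∈ Icc a b)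
    (hfz : ∀ i, f (z i) = 0) : ∃ ξ ∈ Icc a b, iteratedDeriv n f ξ = 0 := by
  induction n generalizing f with
  | zero => exact ⟨z 0, hmem 0, by simpa using hfz 0⟩
  | succ n ih =>
    set σ := Tuple.sort z
    have hmono : StrictMono (z ∘ σ) :=
      (Tuple.monotone_sort z).strictMono_of_injective (hz.comp σ.injective)
    obtain ⟨ξ, hξ, hξz⟩ := exists_strictMono_deriv_eq_zero hf.continuous hmono (fun i => hfz _)
    have hξmem : ∀ i, ξ i ∈ Icc a b := fun i =>
      ⟨(hmem _).1.trans (hξz i).1.1.le, (hξz i).1.2.le.trans (hmem _).2⟩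
    have hdf : ContDiff ℝ n (deriv f) := (contDiff_succ_iff_deriv.mp hf).2.2
    rw [iteratedDeriv_succ']
    exact ih hdf hξ.injective hξmem fun i => (hξz i).2

lemma abs_le_integral_abs_deriv_of_eq_zero {f : ℝ → ℝ} (hf : Differentiable ℝ f)
    (hcont : Continuous (deriv f)) {a b ξ : ℝ} (hξ : ξ ∈ Icc a b) (hfξ : f ξ = 0) {x : ℝ}
    (hx : x ∈ Icc a b) :
    |f x| ≤ ∫ t in a..b, |deriv f t| := by
  have hftc : ∫ t in ξ..x, deriv f t = f x := by
    rw [intervalIntegral.integral_deriv_eq_sub (fun t _ => hf t)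
      (hcont.intervalIntegrable _ _), hfξ, sub_zero]
  have hsub : uIoc ξ x ⊆ Ioc a b :=
    Ioc_subset_Ioc (le_min hξ.1 hx.1) (max_le hξ.2 hx.2)
  calc |f x| = ‖∫ t in ξ..x, deriv f t‖ := by rw [hftc, Real.norm_eq_abs]
    _ ≤ ∫ t in uIoc ξ x, ‖deriv f t‖ := intervalIntegral.norm_integral_le_integral_norm_uIoc
    _ ≤ ∫ t in Ioc a b, |deriv f t| :=
      setIntegral_mono_set hcont.abs.integrableOn_Ioc (ae_of_all _ fun t => abs_nonneg _)
        hsub.eventuallyLE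
    _ = ∫ t in a..b, |deriv f t| := (intervalIntegral.integral_of_le (hξ.1.trans hξ.2)).symm

lemma abs_le_mul_of_abs_deriv_le_of_eq_zero {f : ℝ → ℝ} {a b ξ M : ℝ}
    (hf : ∀ x ∈ Icc a b, DifferentiableAt ℝ f x) (hM : ∀ x ∈ Icc a b, |deriv f x| ≤ M)
    (hξ : ξ ∈ Icc a b) (hfξ : f ξ = 0) {x : ℝ} (hx : x ∈ Icc a b) :
    |f x| ≤ M * (b - a) := by
  have hmvt := (convex_Icc a b).norm_image_sub_le_of_norm_deriv_le hf hM hξ hx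
  rw [hfξ, sub_zero] at hmvt
  calc |f x| ≤ M * |x - ξ| := hmvt
    _ ≤ M * (b - a) := by
      gcongr
      · exact (abs_nonneg _).trans (hM x hx)
      · exact abs_sub_le_iff.mpr ⟨by linarith [hx.2, hξ.1], by linarith [hx.1, hξ.2]⟩

lemma integral_abs_le_sqrt_mul_sqrt_integral_sq {a b : ℝ} (hab : a ≤ b) {G : ℝ → ℝ}
    (hG : MemLp G 2 (volume.restrict (Ioc a b))) :
    ∫ t in a..b, |G t| ≤ √(b - a) * √(∫ t in a..b, G t ^ 2) := by
  have hG' : MemLp (fun t => |G t|) (ENNReal.ofReal 2) (volume.restrict (Ioc a b)) := by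
    rw [ENNReal.ofReal_ofNat]
    exact hG.abs
  have hholder := integral_mul_le_Lp_mul_Lq_of_nonneg Real.HolderConjugate.two_two
    (ae_of_all _ fun t => abs_nonneg (G t)) (ae_of_all _ fun _ => zero_le_one) hG'
    (memLp_const (1 : ℝ))
  simp only [mul_one, one_pow, Real.rpow_two, sq_abs, integral_const, smul_eq_mul,
    measureReal_restrict_apply_univ, Real.volume_real_Ioc_of_le hab] at hholder
  rw [intervalIntegral.integral_of_le hab, intervalIntegral.integral_of_le hab,
    Real.sqrt_eq_rpow, Real.sqrt_eq_rpow, mul_comm]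
  exact hholder

lemma abs_iteratedDeriv_le_of_exists_zero {n : ℕ} {f : ℝ → ℝ} (hf : ContDiff ℝ n f)
    {a b M : ℝ} (hzero : ∀ k < n, ∃ ξ ∈ Icc a b, iteratedDeriv k f ξ = 0)
    (hM : ∀ x ∈ Icc a b, |iteratedDeriv n f x| ≤ M) {k : ℕ} (hk : k ≤ n) {x : ℝ}
    (hx : x ∈ Icc a b) :
    |iteratedDeriv k f x| ≤ M * (b - a) ^ (n - k) := by
  suffices ∀ j k, k + j = n → ∀ x ∈ Icc a b, |iteratedDeriv k f x| ≤ M * (b - a) ^ j from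
    this (n - k) k (by omega) x hx
  intro j
  induction j with
  | zero =>
    rintro k rfl x hx
    simpa using hM x hx
  | succ j ih =>
    intro k hkj x hx
    obtain ⟨ξ, hξ, hfξ⟩ := hzero k (by omega)
    have hdiff : Differentiable ℝ (iteratedDeriv k f) :=
      hf.differentiable_iteratedDeriv k (by exact_mod_cast (by omega : k < n))
    have hderiv : ∀ y ∈ Icc a b, |deriv (iteratedDeriv k f) y| ≤ M * (b - a) ^ j := by
      intro y hy
      rw [← iteratedDeriv_succ]
      exact ih (k + 1) (by omega) y hy
    calc |iteratedDeriv k f x| ≤ M * (b - a) ^ j * (b - a) :=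
          abs_le_mul_of_abs_deriv_le_of_eq_zero (fun y _ => hdiff y) hderiv hξ hfξ hx
      _ = M * (b - a) ^ (j + 1) := by ring

lemma abs_iteratedDeriv_le_integral_mul_pow {n : ℕ} {f : ℝ → ℝ} (hf : ContDiff ℝ (n + 1 : ℕ) f)
    {a b : ℝ} (hzero : ∀ k ≤ n, ∃ ξ ∈ Icc a b, iteratedDeriv k f ξ = 0) {k : ℕ} (hk : k ≤ n)
    {x : ℝ} (hx : x ∈ Icc a b) :
    |iteratedDeriv k f x| ≤ (∫ t in a..b, |iteratedDeriv (n + 1) f t|) * (b - a) ^ (n - k) := by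
  have htop : ∀ y ∈ Icc a b, |iteratedDeriv n f y| ≤ ∫ t in a..b, |iteratedDeriv (n + 1) f t| := by
    obtain ⟨ξ, hξ, hfξ⟩ := hzero n le_rfl
    intro y hy
    simpa only [iteratedDeriv_succ] using abs_le_integral_abs_deriv_of_eq_zero
      (hf.differentiable_iteratedDeriv' n)
      (by simpa only [iteratedDeriv_succ] using hf.continuous_iteratedDeriv' (n + 1)) hξ hfξ hy
  exact abs_iteratedDeriv_le_of_exists_zero (hf.of_le (by exact_mod_cast n.le_succ))
    (fun k hk => hzero k hk.le) htop hk hx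

lemma sqrt_mul_pow_le_rpow {d h : ℝ} (hd : 0 ≤ d) (hdh : d ≤ h) {p : ℕ} (hp : 1 ≤ p) :
    √d * d ^ (p - 1) ≤ h ^ ((p : ℝ) - 1 / 2) := by
  have hexp : (p : ℝ) - 1 / 2 = 1 / 2 + ((p - 1 : ℕ) : ℝ) := by
    rw [Nat.cast_sub hp]
    ring
  calc √d * d ^ (p - 1) = d ^ ((p : ℝ) - 1 / 2) := by
        rw [hexp, Real.rpow_add' hd (by positivity), Real.rpow_natCast, Real.sqrt_eq_rpow]
    _ ≤ h ^ ((p : ℝ) - 1 / 2) := Real.rpow_le_rpow hd hdh (by rw [hexp]; positivity)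

/-- pointwise bound on the derivative of the polynomial interpolation error:
if `q` of degree `≤ p` interpolates `v` at `p+1` distinct points of an interval of length at
most `h`, then `|(v − q)'(x)| ≤ h^{p − 1/2} ‖v^{(p+1)}‖_{L²(ς)}` on that interval. -/
theorem stmt9 (p : ℕ) (hp : 1 ≤ p) (a b h : ℝ) (hab : a < b) (hlen : b - a ≤ h)
    (v : ℝ → ℝ) (hv : ContDiff ℝ (p + 1 : ℕ) v)
    (q : Polynomial ℝ) (hq : q.natDegree ≤ p)
    (pts : Fin (p + 1) → ℝ) (hinj : Function.Injective pts)
    (hpts : ∀ i, pts i ∈ Set.Icc a b)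
    (hinterp : ∀ i, v (pts i) = q.eval (pts i)) :
    ∀ x ∈ Set.Icc a b,
      |deriv (fun y => v y - q.eval y) x| ≤
        h ^ ((p : ℝ) - 1 / 2) *
          Real.sqrt (∫ t in a..b, (iteratedDeriv (p + 1) v t) ^ 2) := by
  intro x hx
  set e : ℝ → ℝ := fun y => v y - q.eval y
  have he : ContDiff ℝ (p + 1 : ℕ) e := hv.sub (q.contDiff_eval _)
  have hzero : ∀ k ≤ p, ∃ ξ ∈ Icc a b, iteratedDeriv k e ξ = 0 := fun k hk =>
    exists_iteratedDeriv_eq_zero (he.of_le (by exact_mod_cast by omega))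
      (hinj.comp (Fin.castLE_injective (by omega))) (fun _ => hpts _)
      (fun _ => sub_eq_zero.mpr (hinterp _))
  have hbound := abs_iteratedDeriv_le_integral_mul_pow he hzero hp hx
  rw [iteratedDeriv_one, iteratedDeriv_sub_eval_of_natDegree_lt hv (by omega)] at hbound
  have hv_top : Continuous (iteratedDeriv (p + 1) v) := hv.continuous_iteratedDeriv' _
  have hL2 : MemLp (iteratedDeriv (p + 1) v) 2 (volume.restrict (Ioc a b)) :=
    (memLp_two_iff_integrable_sq hv_top.aestronglyMeasurable).mpr (hv_top.pow 2).integrableOn_Ioc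
  calc |deriv e x| ≤ (∫ t in a..b, |iteratedDeriv (p + 1) v t|) * (b - a) ^ (p - 1) := hbound
    _ ≤ √(b - a) * √(∫ t in a..b, iteratedDeriv (p + 1) v t ^ 2) * (b - a) ^ (p - 1) := by
      gcongr
      exact integral_abs_le_sqrt_mul_sqrt_integral_sq hab.le hL2
    _ = (√(b - a) * (b - a) ^ (p - 1)) * √(∫ t in a..b, iteratedDeriv (p + 1) v t ^ 2) := by
      ring
    _ ≤ h ^ ((p : ℝ) - 1 / 2) * √(∫ t in a..b, iteratedDeriv (p + 1) v t ^ 2) := by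
      gcongr
      exact sqrt_mul_pow_le_rpow (sub_pos.mpr hab).le hlen hp
end
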